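/- Let k ≥ 2, d ≥ 1, and let S = ((x_1,y_1),…,(x_m,y_m)) be a training set with each x_i ∈ ℝ^d, ‖x_i‖_∞ ≤ 1, and y_i ∈ {1,…,k}. Let (F_t, W_t, j_t) be a ShareBoost sequence for the training loss L. Then for every ε > 0 and every matrix W★ ∈ ℝ^{k×d}, after T = ⌈4‖W★‖²_{∞,1}/ε⌉ iterations the matrix W_T satisfies ‖W_T‖_{∞,0} ≤ T and L(W_T) ≤ L(W★) + ε. -/

import Mathlib

open scoped BigOperators

noncomputable section


/-- The multiclass logistic loss for label `y`. -/
def mcLoss (k : ℕ) (y : Fin k) (v : Fin k → ℝ) : ℝ :=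
  Real.log (∑ y' : Fin k, Real.exp ((if y' ≠ y then (1 : ℝ) else 0) - v y + v y'))

/-- The average training loss of the matrix `W` (viewed as `Fin k → Fin d → ℝ`). -/
def trainLoss (k d m : ℕ) (x : Fin m → Fin d → ℝ) (y : Fin m → Fin k)
    (W : Fin k → Fin d → ℝ) : ℝ :=
  (1 / (m : ℝ)) * ∑ i : Fin m, mcLoss k (y i) (fun q => ∑ j : Fin d, W q j * x i j)

/-- The `r`-th column of the gradient matrix of `L` at `W`. -/
def gradCol (k d : ℕ) (L : (Fin k → Fin d → ℝ) → ℝ) (W : Fin k → Fin d → ℝ)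
    (r : Fin d) : Fin k → ℝ :=
  fun q => fderiv ℝ L W (fun q' j' => if q' = q ∧ j' = r then (1 : ℝ) else 0)


namespace SBaux

variable {ι : Type*} [Fintype ι] [Nonempty ι]

def S1 (a b : ι → ℝ) (η : ℝ) : ℝ := ∑ j, Real.exp (a j + b j * η)
def N1 (a b : ι → ℝ) (η : ℝ) : ℝ := ∑ j, b j * Real.exp (a j + b j * η)
def Q1 (a b : ι → ℝ) (η : ℝ) : ℝ := ∑ j, (b j)^2 * Real.exp (a j + b j * η)
def psi (a b : ι → ℝ) (η : ℝ) : ℝ := Real.log (S1 a b η)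

lemma S1_pos (a b : ι → ℝ) (η : ℝ) : 0 < S1 a b η :=
  Finset.sum_pos (fun j _ => Real.exp_pos _) Finset.univ_nonempty

lemma hasDerivAt_S1 (a b : ι → ℝ) (η : ℝ) :
    HasDerivAt (S1 a b) (N1 a b η) η := by
  apply HasDerivAt.fun_sum
  intro j _
  have h : HasDerivAt (fun η : ℝ => a j + b j * η) (b j) η := by
    simpa using ((hasDerivAt_id η).const_mul (b j)).const_add (a j)
  simpa [mul_comm] using h.exp

lemma hasDerivAt_N1 (a b : ι → ℝ) (η : ℝ) :
    HasDerivAt (N1 a b) (Q1 a b η) η := by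
  apply HasDerivAt.fun_sum
  intro j _
  have h : HasDerivAt (fun η : ℝ => a j + b j * η) (b j) η := by
    simpa using ((hasDerivAt_id η).const_mul (b j)).const_add (a j)
  have := (h.exp).const_mul (b j)
  convert this using 1
  · rfl
  ring

lemma hasDerivAt_psi (a b : ι → ℝ) (η : ℝ) :
    HasDerivAt (psi a b) (N1 a b η / S1 a b η) η :=
  (hasDerivAt_S1 a b η).log (S1_pos a b η).ne'

lemma cs_ineq (a b : ι → ℝ) (η : ℝ) :
    (N1 a b η)^2 ≤ Q1 a b η * S1 a b η := by
  have := Finset.sum_mul_sq_le_sq_mul_sq Finset.univ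
    (fun j => b j * Real.sqrt (Real.exp (a j + b j * η)))
    (fun j => Real.sqrt (Real.exp (a j + b j * η)))
  have e1 : ∀ j : ι, b j * Real.sqrt (Real.exp (a j + b j * η)) *
      Real.sqrt (Real.exp (a j + b j * η)) = b j * Real.exp (a j + b j * η) := by
    intro j
    rw [mul_assoc, Real.mul_self_sqrt (Real.exp_nonneg _)]
  have e2 : ∀ j : ι, (b j * Real.sqrt (Real.exp (a j + b j * η)))^2 =
      (b j)^2 * Real.exp (a j + b j * η) := by
    intro j
    rw [mul_pow, Real.sq_sqrt (Real.exp_nonneg _)]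
  have e3 : ∀ j : ι, (Real.sqrt (Real.exp (a j + b j * η)))^2 =
      Real.exp (a j + b j * η) := fun j => Real.sq_sqrt (Real.exp_nonneg _)
  simp only [e1, e2, e3] at this
  simpa [N1, Q1, S1] using this

lemma var_le (a b : ι → ℝ) (c : ℝ) (hb : ∀ j, |b j - c| ≤ 1) (η : ℝ) :
    Q1 a b η * S1 a b η - (N1 a b η)^2 ≤ (S1 a b η)^2 := by
  have hQc : (∑ j, (b j - c)^2 * Real.exp (a j + b j * η))
      = Q1 a b η - 2*c*(N1 a b η) + c^2 * S1 a b η := by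
    simp only [Q1, N1, S1, Finset.mul_sum]
    rw [← Finset.sum_sub_distrib, ← Finset.sum_add_distrib]
    exact Finset.sum_congr rfl fun j _ => by ring
  have hNc : (∑ j, (b j - c) * Real.exp (a j + b j * η)) = N1 a b η - c * S1 a b η := by
    simp only [N1, S1, Finset.mul_sum]
    rw [← Finset.sum_sub_distrib]
    exact Finset.sum_congr rfl fun j _ => by ring
  have hident : Q1 a b η * S1 a b η - (N1 a b η)^2 =
      (∑ j, (b j - c)^2 * Real.exp (a j + b j * η)) * S1 a b η
        - (∑ j, (b j - c) * Real.exp (a j + b j * η))^2 := by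
    rw [hQc, hNc]; ring
  have hQcle : (∑ j, (b j - c)^2 * Real.exp (a j + b j * η)) ≤ S1 a b η := by
    simp only [S1]
    apply Finset.sum_le_sum
    intro j _
    have h1 : (b j - c)^2 ≤ 1 := by
      have := hb j
      nlinarith [abs_nonneg (b j - c), sq_abs (b j - c)]
    nlinarith [Real.exp_pos (a j + b j * η)]
  have hS := S1_pos a b η
  have hNc2 : 0 ≤ (∑ j, (b j - c) * Real.exp (a j + b j * η))^2 := sq_nonneg _
  nlinarith

lemma psi'_monotone (a b : ι → ℝ) : Monotone (fun η => N1 a b η / S1 a b η) := by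
  apply monotone_of_deriv_nonneg
  · intro η
    exact ((hasDerivAt_N1 a b η).div (hasDerivAt_S1 a b η) (S1_pos a b η).ne').differentiableAt
  · intro η
    have h := (hasDerivAt_N1 a b η).div (hasDerivAt_S1 a b η) (S1_pos a b η).ne'
    rw [show deriv (fun η => N1 a b η / S1 a b η) η = _ from h.deriv]
    have := cs_ineq a b η
    have hS := S1_pos a b η
    apply div_nonneg (by nlinarith) (by positivity)

/-- Convexity-type lower bound. -/
lemma lemB (a b : ι → ℝ) : psi a b 0 + N1 a b 0 / S1 a b 0 ≤ psi a b 1 := by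
  obtain ⟨ξ, hξ, heq⟩ := exists_hasDerivAt_eq_slope (psi a b) (fun η => N1 a b η / S1 a b η)
    one_pos (fun η _ => (hasDerivAt_psi a b η).continuousAt.continuousWithinAt)
    (fun η _ => hasDerivAt_psi a b η)
  have hmono : N1 a b 0 / S1 a b 0 ≤ N1 a b ξ / S1 a b ξ := psi'_monotone a b hξ.1.le
  rw [heq] at hmono
  simp only [sub_zero, div_one] at hmono
  linarith

/-- Smoothness-type upper bound, for nonnegative step. -/
lemma lemA (a b : ι → ℝ) (c : ℝ) (hb : ∀ j, |b j - c| ≤ 1) (η : ℝ) (hη : 0 ≤ η) :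
    psi a b η ≤ psi a b 0 + (N1 a b 0 / S1 a b 0) * η + η^2/2 := by
  set h : ℝ → ℝ := fun s => N1 a b 0 / S1 a b 0 + s - N1 a b s / S1 a b s with hhdef
  have hder : ∀ s, HasDerivAt h
      (1 - (Q1 a b s * S1 a b s - N1 a b s * N1 a b s) / (S1 a b s)^2) s := by
    intro s
    have h1 := (hasDerivAt_N1 a b s).div (hasDerivAt_S1 a b s) (S1_pos a b s).ne'
    have h2 : HasDerivAt (fun s : ℝ => N1 a b 0 / S1 a b 0 + s) 1 s := by
      simpa using (hasDerivAt_id s).const_add (N1 a b 0 / S1 a b 0)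
    exact h2.sub h1
  have hmono : Monotone h := by
    apply monotone_of_deriv_nonneg
    · intro s; exact (hder s).differentiableAt
    · intro s
      rw [(hder s).deriv]
      have hv := var_le a b c hb s
      have hS := S1_pos a b s
      have : (Q1 a b s * S1 a b s - N1 a b s * N1 a b s) / (S1 a b s)^2 ≤ 1 := by
        rw [div_le_one (by positivity)]
        nlinarith
      linarith
  set φ : ℝ → ℝ := fun s => psi a b 0 + (N1 a b 0 / S1 a b 0) * s + s^2/2 - psi a b s with hφdef
  have hφder : ∀ s, HasDerivAt φ (h s) s := by
    intro s
    have h1 : HasDerivAt (fun s : ℝ => psi a b 0 + (N1 a b 0 / S1 a b 0) * s + s^2/2)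
        (N1 a b 0 / S1 a b 0 + s) s := by
      have ha : HasDerivAt (fun s : ℝ => (N1 a b 0 / S1 a b 0) * s) (N1 a b 0 / S1 a b 0) s := by
        simpa using (hasDerivAt_id s).const_mul (N1 a b 0 / S1 a b 0)
      have hb' : HasDerivAt (fun s : ℝ => s^2/2) s s := by
        have := (hasDerivAt_pow 2 s).div_const 2
        simpa [mul_comm] using this
      exact (ha.const_add (psi a b 0)).add hb'
    exact h1.sub (hasDerivAt_psi a b s)
  have hφmono : MonotoneOn φ (Set.Ici 0) := by
    apply monotoneOn_of_deriv_nonneg (convex_Ici 0)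
    · have hd : Differentiable ℝ φ := fun s => (hφder s).differentiableAt
      exact hd.continuous.continuousOn
    · intro s _
      exact ((hφder s).differentiableAt).differentiableWithinAt
    · intro s hs
      rw [(hφder s).deriv]
      have h0 : h 0 = 0 := by simp [hhdef]
      have := hmono (le_of_lt (by simpa using hs : (0:ℝ) < s))
      rw [h0] at this
      exact this
  have := hφmono (Set.self_mem_Ici) (Set.mem_Ici.mpr hη) hη
  have hφ0 : φ 0 = 0 := by simp [hφdef]
  rw [hφ0] at this
  simp only [hφdef] at this
  linarith

end SBaux

namespace SBaux

section Main

variable (k d m : ℕ) (x : Fin m → Fin d → ℝ) (y : Fin m → Fin k)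

/-- coefficients of the per-sample one-dimensional function along a line. -/
def ax (W : Fin k → Fin d → ℝ) (i : Fin m) : Fin k → ℝ := fun y' =>
  (if y' ≠ y i then (1:ℝ) else 0) - (∑ j, W (y i) j * x i j) + (∑ j, W y' j * x i j)

def bx (V : Fin k → Fin d → ℝ) (i : Fin m) : Fin k → ℝ := fun y' =>
  (∑ j, V y' j * x i j) - (∑ j, V (y i) j * x i j)

lemma line_eq (W V : Fin k → Fin d → ℝ) (η : ℝ) :
    trainLoss k d m x y (W + η • V) = (1/(m:ℝ)) * ∑ i, psi (ax k d m x y W i) (bx k d m x y V i) η := by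
  unfold trainLoss mcLoss psi S1
  congr 1
  apply Finset.sum_congr rfl; intro i _
  congr 1
  apply Finset.sum_congr rfl; intro y' _
  congr 1
  have hsum : ∀ q : Fin k, (∑ j, (W + η • V) q j * x i j)
      = (∑ j, W q j * x i j) + η * ∑ j, V q j * x i j := by
    intro q
    rw [Finset.mul_sum, ← Finset.sum_add_distrib]
    apply Finset.sum_congr rfl
    intro j _
    simp only [Pi.add_apply, Pi.smul_apply, smul_eq_mul]
    ring
  simp only [hsum]
  simp only [ax, bx]
  ring

lemma hasDerivAt_trainLine (W V : Fin k → Fin d → ℝ)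
    (hk : 2 ≤ k) (η : ℝ) :
    HasDerivAt (fun η => trainLoss k d m x y (W + η • V))
      ((1/(m:ℝ)) * ∑ i, N1 (ax k d m x y W i) (bx k d m x y V i) η
        / S1 (ax k d m x y W i) (bx k d m x y V i) η) η := by
  have : Nonempty (Fin k) := ⟨⟨0, by omega⟩⟩
  have heq : (fun η => trainLoss k d m x y (W + η • V))
      = fun η => (1/(m:ℝ)) * ∑ i, psi (ax k d m x y W i) (bx k d m x y V i) η :=
    funext (line_eq k d m x y W V)
  rw [heq]
  exact (HasDerivAt.fun_sum (fun i _ => hasDerivAt_psi (ax k d m x y W i) (bx k d m x y V i) η)).const_mul (1/(m:ℝ))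

lemma diff_trainLoss (hk : 2 ≤ k) : Differentiable ℝ (trainLoss k d m x y) := by
  have : Nonempty (Fin k) := ⟨⟨0, by omega⟩⟩
  unfold trainLoss mcLoss
  apply Differentiable.const_mul
  apply Differentiable.fun_sum
  intro i _
  have hv : ∀ q : Fin k, Differentiable ℝ (fun W : Fin k → Fin d → ℝ => ∑ j, W q j * x i j) := by
    intro q
    apply Differentiable.fun_sum
    intro j _
    have h1 : Differentiable ℝ (fun W : Fin k → Fin d → ℝ => W q j) := by
      have := differentiable_pi.mp (differentiable_id (𝕜 := ℝ)
        (E := Fin k → Fin d → ℝ)) q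
      exact differentiable_pi.mp this j
    exact h1.mul_const (x i j)
  apply Differentiable.log
  · apply Differentiable.fun_sum
    intro y' _
    exact (((hv (y i)).const_sub _).add (hv y')).exp
  · intro W
    exact (Finset.sum_pos (fun j _ => Real.exp_pos _) Finset.univ_nonempty).ne'

lemma fderiv_eq (hk : 2 ≤ k) (W V : Fin k → Fin d → ℝ) :
    fderiv ℝ (trainLoss k d m x y) W V
      = (1/(m:ℝ)) * ∑ i, N1 (ax k d m x y W i) (bx k d m x y V i) 0
        / S1 (ax k d m x y W i) (bx k d m x y V i) 0 := by
  have h1 : HasDerivAt (fun η : ℝ => W + η • V) V 0 := by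
    have h := ((hasDerivAt_id (0:ℝ)).smul_const V).const_add W
    simpa using h
  have hW : W + (0:ℝ) • V = W := by simp
  have hf : HasFDerivAt (trainLoss k d m x y) (fderiv ℝ (trainLoss k d m x y) W)
      ((fun η : ℝ => W + η • V) 0) := by
    simpa [hW] using (diff_trainLoss k d m x y hk W).hasFDerivAt
  have h2 := hf.comp_hasDerivAt 0 h1
  exact h2.unique (hasDerivAt_trainLine k d m x y W V hk 0)

lemma fderiv_expand (hk : 2 ≤ k) (W V : Fin k → Fin d → ℝ) :
    fderiv ℝ (trainLoss k d m x y) W V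
      = ∑ q : Fin k, ∑ r : Fin d, V q r * gradCol k d (trainLoss k d m x y) W r q := by
  have hdecomp : V = ∑ q : Fin k, ∑ r : Fin d,
      V q r • (fun q' j' => if q' = q ∧ j' = r then (1:ℝ) else 0) := by
    funext q' j'
    simp only [Finset.sum_apply, Pi.smul_apply, smul_eq_mul, ite_and, mul_ite, mul_one, mul_zero]
    rw [Finset.sum_comm]
    simp [Finset.sum_ite_eq']
  conv_lhs => rw [hdecomp]
  rw [map_sum]
  apply Finset.sum_congr rfl
  intro q _
  rw [map_sum]
  apply Finset.sum_congr rfl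
  intro r _
  rw [map_smul]
  rfl

lemma convex_bound (hk : 2 ≤ k) (W V : Fin k → Fin d → ℝ) :
    trainLoss k d m x y W + fderiv ℝ (trainLoss k d m x y) W V
      ≤ trainLoss k d m x y (W + V) := by
  have : Nonempty (Fin k) := ⟨⟨0, by omega⟩⟩
  have h0 : trainLoss k d m x y W
      = (1/(m:ℝ)) * ∑ i, psi (ax k d m x y W i) (bx k d m x y V i) 0 := by
    have := line_eq k d m x y W V 0
    simpa using this
  have h1 : trainLoss k d m x y (W + V)
      = (1/(m:ℝ)) * ∑ i, psi (ax k d m x y W i) (bx k d m x y V i) 1 := by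
    have := line_eq k d m x y W V 1
    simpa using this
  rw [h0, h1, fderiv_eq k d m x y hk W V, ← mul_add]
  apply mul_le_mul_of_nonneg_left _ (by positivity)
  rw [← Finset.sum_add_distrib]
  exact Finset.sum_le_sum fun i _ => lemB _ _

lemma descent_bound (hk : 2 ≤ k) (hm : 1 ≤ m) (hx : ∀ i : Fin m, ‖x i‖ ≤ 1)
    (Wm E : Fin k → Fin d → ℝ) (jt : Fin d)
    (hEcol : ∀ q r, r ≠ jt → E q r = 0) (hEbd : ∀ q, |E q jt| ≤ 1)
    (η : ℝ) (hη : 0 ≤ η) :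
    trainLoss k d m x y (Wm + η • E) ≤ trainLoss k d m x y Wm
      + fderiv ℝ (trainLoss k d m x y) Wm E * η + η^2/2 := by
  have : Nonempty (Fin k) := ⟨⟨0, by omega⟩⟩
  have hm0 : (m:ℝ) ≠ 0 := by
    have : (0:ℝ) < m := by exact_mod_cast hm
    exact this.ne'
  have hEx : ∀ (i : Fin m) (q : Fin k), (∑ j, E q j * x i j) = E q jt * x i jt := by
    intro i q
    apply Finset.sum_eq_single jt
    · intro j _ hj
      rw [hEcol q j hj, zero_mul]
    · intro h; exact absurd (Finset.mem_univ _) h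
  have hxbd : ∀ (i : Fin m) (j : Fin d), |x i j| ≤ 1 := by
    intro i j
    have := (norm_le_pi_norm (x i) j).trans (hx i)
    rwa [Real.norm_eq_abs] at this
  have key : ∀ i : Fin m, psi (ax k d m x y Wm i) (bx k d m x y E i) η
      ≤ psi (ax k d m x y Wm i) (bx k d m x y E i) 0
        + (N1 (ax k d m x y Wm i) (bx k d m x y E i) 0
            / S1 (ax k d m x y Wm i) (bx k d m x y E i) 0) * η + η^2/2 := by
    intro i
    apply lemA _ _ (- (E (y i) jt * x i jt)) _ η hη
    intro y'
    have : bx k d m x y E i y' - (- (E (y i) jt * x i jt)) = E y' jt * x i jt := by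
      simp only [bx, hEx]
      ring
    rw [this, abs_mul]
    calc |E y' jt| * |x i jt| ≤ 1 * 1 :=
          mul_le_mul (hEbd y') (hxbd i jt) (abs_nonneg _) zero_le_one
      _ = 1 := by norm_num
  have h0 : trainLoss k d m x y Wm
      = (1/(m:ℝ)) * ∑ i, psi (ax k d m x y Wm i) (bx k d m x y E i) 0 := by
    have := line_eq k d m x y Wm E 0
    simpa using this
  rw [line_eq k d m x y Wm E η, h0, fderiv_eq k d m x y hk Wm E]
  have e1 : ∑ i, (psi (ax k d m x y Wm i) (bx k d m x y E i) 0
        + (N1 (ax k d m x y Wm i) (bx k d m x y E i) 0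
            / S1 (ax k d m x y Wm i) (bx k d m x y E i) 0) * η + η^2/2)
      = (∑ i, psi (ax k d m x y Wm i) (bx k d m x y E i) 0)
        + (∑ i, N1 (ax k d m x y Wm i) (bx k d m x y E i) 0
            / S1 (ax k d m x y Wm i) (bx k d m x y E i) 0) * η + (m:ℝ) * (η^2/2) := by
    rw [Finset.sum_add_distrib, Finset.sum_add_distrib, ← Finset.sum_mul, Finset.sum_const,
      Finset.card_univ, Fintype.card_fin, nsmul_eq_mul]
  calc (1/(m:ℝ)) * ∑ i, psi (ax k d m x y Wm i) (bx k d m x y E i) η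
      ≤ (1/(m:ℝ)) * ∑ i, (psi (ax k d m x y Wm i) (bx k d m x y E i) 0
        + (N1 (ax k d m x y Wm i) (bx k d m x y E i) 0
            / S1 (ax k d m x y Wm i) (bx k d m x y E i) 0) * η + η^2/2) :=
        mul_le_mul_of_nonneg_left (Finset.sum_le_sum fun i _ => key i) (by positivity)
    _ = (1/(m:ℝ)) * ∑ i, psi (ax k d m x y Wm i) (bx k d m x y E i) 0
        + ((1/(m:ℝ)) * ∑ i, N1 (ax k d m x y Wm i) (bx k d m x y E i) 0
            / S1 (ax k d m x y Wm i) (bx k d m x y E i) 0) * η + η^2/2 := by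
        rw [e1]
        field_simp

end Main
end SBaux

/-- A ShareBoost sequence for the training loss determined by the sample `(x, y)`. -/
structure ShareBoostSeq (k d m : ℕ) (x : Fin m → Fin d → ℝ) (y : Fin m → Fin k)
    (F : ℕ → Finset (Fin d)) (W : ℕ → Fin k → Fin d → ℝ) (jj : ℕ → Fin d) : Prop where
  F_zero : F 0 = ∅
  W_supp : ∀ t, ∀ i ∉ F t, ∀ q, W t q i = 0
  W_min : ∀ t, ∀ V : Fin k → Fin d → ℝ, (∀ i ∉ F t, ∀ q, V q i = 0) →
    trainLoss k d m x y (W t) ≤ trainLoss k d m x y V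
  j_max : ∀ t, ∀ r : Fin d,
    ∑ q : Fin k, |gradCol k d (trainLoss k d m x y) (W t) r q| ≤
      ∑ q : Fin k, |gradCol k d (trainLoss k d m x y) (W t) (jj t) q|
  F_succ : ∀ t, F (t + 1) = insert (jj t) (F t)

set_option maxHeartbeats 2000000 in
theorem shareBoost_sparsity_guarantee
    (k d m : ℕ) (hk : 2 ≤ k) (hd : 1 ≤ d) (hm : 1 ≤ m)
    (x : Fin m → Fin d → ℝ) (y : Fin m → Fin k)
    (hx : ∀ i : Fin m, ‖x i‖ ≤ 1)
    (F : ℕ → Finset (Fin d)) (W : ℕ → Fin k → Fin d → ℝ) (jj : ℕ → Fin d)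
    (hSB : ShareBoostSeq k d m x y F W jj)
    (ε : ℝ) (hε : 0 < ε)
    (Wstar : Fin k → Fin d → ℝ)
    (T : ℕ) (hT : T = ⌈4 * (∑ r : Fin d, ‖fun q => Wstar q r‖) ^ 2 / ε⌉₊) :
    {r : Fin d | ∃ q, W T q r ≠ 0}.ncard ≤ T ∧
      trainLoss k d m x y (W T) ≤ trainLoss k d m x y Wstar + ε := by
  have hNk : Nonempty (Fin k) := ⟨⟨0, by omega⟩⟩
  set L := trainLoss k d m x y with hL
  -- Part 1 : sparsity
  have hFcard : ∀ t, (F t).card ≤ t := by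
    intro t
    induction t with
    | zero => simp [hSB.F_zero]
    | succ t ih =>
      rw [hSB.F_succ t]
      calc (insert (jj t) (F t)).card ≤ (F t).card + 1 := Finset.card_insert_le _ _
        _ ≤ t + 1 := by omega
  have hsub : {r : Fin d | ∃ q, W T q r ≠ 0} ⊆ ↑(F T) := by
    intro r hr
    obtain ⟨q, hq⟩ := hr
    by_contra hmem
    exact hq (hSB.W_supp T r (by simpa using hmem) q)
  have part1 : {r : Fin d | ∃ q, W T q r ≠ 0}.ncard ≤ T := by
    calc {r : Fin d | ∃ q, W T q r ≠ 0}.ncard ≤ (↑(F T) : Set (Fin d)).ncard :=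
          Set.ncard_le_ncard hsub (F T).finite_toSet
      _ = (F T).card := Set.ncard_coe_finset _
      _ ≤ T := hFcard T
  refine ⟨part1, ?_⟩
  -- notation
  set g : ℕ → Fin d → Fin k → ℝ := fun t => gradCol k d L (W t) with hg
  set G : ℕ → ℝ := fun t => ∑ q : Fin k, |g t (jj t) q| with hG
  have hG0 : ∀ t, 0 ≤ G t := fun t => Finset.sum_nonneg fun q _ => abs_nonneg _
  set B : ℝ := ∑ r : Fin d, ‖fun q => Wstar q r‖ with hB
  have hB0 : 0 ≤ B := Finset.sum_nonneg fun r _ => norm_nonneg _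
  -- stationarity on the support
  have hstat : ∀ t, ∀ r ∈ F t, ∀ q, g t r q = 0 := by
    intro t r hr q
    set e : Fin k → Fin d → ℝ := fun q' j' => if q' = q ∧ j' = r then (1:ℝ) else 0 with he
    have hline : HasDerivAt (fun s : ℝ => L (W t + s • e)) (fderiv ℝ L (W t) e) 0 := by
      have h1 : HasDerivAt (fun s : ℝ => W t + s • e) e 0 := by
        simpa using (((hasDerivAt_id (0:ℝ)).smul_const e).const_add (W t))
      have hW : W t + (0:ℝ) • e = W t := by simp
      have hf : HasFDerivAt L (fderiv ℝ L (W t)) ((fun s : ℝ => W t + s • e) 0) := by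
        simpa [hW] using (SBaux.diff_trainLoss k d m x y hk (W t)).hasFDerivAt
      exact hf.comp_hasDerivAt 0 h1
    have hmin : ∀ s : ℝ, L (W t) ≤ L (W t + s • e) := by
      intro s
      apply hSB.W_min t
      intro i hi q'
      have hir : i ≠ r := fun h => hi (h ▸ hr)
      simp [he, hSB.W_supp t i hi q', hir]
    have hlocmin : IsLocalMin (fun s : ℝ => L (W t + s • e)) 0 := by
      apply Filter.Eventually.of_forall
      intro s
      simpa using hmin s
    have hderiv0 : deriv (fun s : ℝ => L (W t + s • e)) 0 = 0 := hlocmin.deriv_eq_zero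
    rw [hline.deriv] at hderiv0
    exact hderiv0
  -- lower bound on the largest gradient column
  have hepsle : ∀ t, L (W t) - L Wstar ≤ B * G t := by
    intro t
    have hconv := SBaux.convex_bound k d m x y hk (W t) (Wstar - W t)
    have hWW : W t + (Wstar - W t) = Wstar := by abel
    rw [hWW] at hconv
    have hexp := SBaux.fderiv_expand k d m x y hk (W t) (Wstar - W t)
    have hsplit : fderiv ℝ L (W t) (Wstar - W t)
        = ∑ q : Fin k, ∑ r : Fin d, Wstar q r * g t r q
          - ∑ q : Fin k, ∑ r : Fin d, W t q r * g t r q := by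
      rw [hexp]
      rw [← Finset.sum_sub_distrib]
      apply Finset.sum_congr rfl
      intro q _
      rw [← Finset.sum_sub_distrib]
      apply Finset.sum_congr rfl
      intro r _
      simp only [Pi.sub_apply]
      ring
    have hzero : ∑ q : Fin k, ∑ r : Fin d, W t q r * g t r q = 0 := by
      apply Finset.sum_eq_zero
      intro q _
      apply Finset.sum_eq_zero
      intro r _
      by_cases hr : r ∈ F t
      · rw [hstat t r hr q, mul_zero]
      · rw [hSB.W_supp t r hr q, zero_mul]
    have hlb : ∑ q : Fin k, ∑ r : Fin d, Wstar q r * g t r q ≥ -(B * G t) := by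
      rw [Finset.sum_comm]
      have hcol : ∀ r : Fin d, -(‖fun q => Wstar q r‖ * G t)
          ≤ ∑ q : Fin k, Wstar q r * g t r q := by
        intro r
        have habs : |∑ q : Fin k, Wstar q r * g t r q|
            ≤ ‖fun q => Wstar q r‖ * G t := by
          calc |∑ q : Fin k, Wstar q r * g t r q| ≤ ∑ q : Fin k, |Wstar q r * g t r q| :=
                Finset.abs_sum_le_sum_abs _ _
            _ ≤ ∑ q : Fin k, ‖fun q => Wstar q r‖ * |g t r q| := by
                apply Finset.sum_le_sum
                intro q _
                rw [abs_mul]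
                apply mul_le_mul_of_nonneg_right _ (abs_nonneg _)
                have := norm_le_pi_norm (fun q => Wstar q r) q
                rwa [Real.norm_eq_abs] at this
            _ = ‖fun q => Wstar q r‖ * ∑ q : Fin k, |g t r q| := by rw [Finset.mul_sum]
            _ ≤ ‖fun q => Wstar q r‖ * G t :=
                mul_le_mul_of_nonneg_left (hSB.j_max t r) (norm_nonneg _)
        have := neg_abs_le (∑ q : Fin k, Wstar q r * g t r q)
        linarith [neg_le_neg habs]
      calc -(B * G t) = ∑ r : Fin d, -(‖fun q => Wstar q r‖ * G t) := by
            rw [Finset.sum_neg_distrib, hB, Finset.sum_mul]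
        _ ≤ ∑ r : Fin d, ∑ q : Fin k, Wstar q r * g t r q :=
            Finset.sum_le_sum fun r _ => hcol r
    rw [hsplit, hzero, sub_zero] at hconv
    linarith
  -- descent step
  have hdesc : ∀ t, L (W (t+1)) ≤ L (W t) - G t ^ 2 / 2 := by
    intro t
    set E : Fin k → Fin d → ℝ := fun q r =>
      if r = jj t then (if 0 ≤ g t (jj t) q then (-1:ℝ) else 1) else 0 with hE
    have hEcol : ∀ q r, r ≠ jj t → E q r = 0 := by
      intro q r hr; simp [hE, hr]
    have hEbd : ∀ q, |E q (jj t)| ≤ 1 := by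
      intro q
      simp only [hE, if_pos rfl]
      split <;> simp
    have hfE : fderiv ℝ L (W t) E = -G t := by
      rw [SBaux.fderiv_expand k d m x y hk (W t) E]
      have hinner : ∀ q : Fin k, ∑ r : Fin d, E q r * g t r q = -|g t (jj t) q| := by
        intro q
        rw [Finset.sum_eq_single (jj t)]
        · simp only [hE, if_pos rfl]
          by_cases h : 0 ≤ g t (jj t) q
          · rw [if_pos h, abs_of_nonneg h]; ring
          · rw [if_neg h, abs_of_neg (lt_of_not_ge h)]; ring
        · intro r _ hr
          rw [hEcol q r hr, zero_mul]
        · intro h; exact absurd (Finset.mem_univ _) h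
      calc ∑ q : Fin k, ∑ r : Fin d, E q r * g t r q
          = ∑ q : Fin k, -|g t (jj t) q| := Finset.sum_congr rfl fun q _ => hinner q
        _ = -G t := by rw [Finset.sum_neg_distrib]
    have hstep := SBaux.descent_bound k d m x y hk hm hx (W t) E (jj t) hEcol hEbd (G t) (hG0 t)
    rw [hfE] at hstep
    have hnext : L (W (t+1)) ≤ L (W t + G t • E) := by
      apply hSB.W_min (t+1)
      intro i hi q
      rw [hSB.F_succ t] at hi
      simp only [Finset.mem_insert, not_or] at hi
      simp [Pi.add_apply, Pi.smul_apply, smul_eq_mul, hSB.W_supp t i hi.2 q, hEcol q i hi.1]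
    have : L (W (t+1)) ≤ L (W t) + (-G t) * G t + G t ^2 / 2 := le_trans hnext hstep
    nlinarith [this]
  have hmono1 : ∀ t, L (W (t+1)) ≤ L (W t) := by
    intro t
    have := hdesc t
    nlinarith [sq_nonneg (G t)]
  have hmono : ∀ s t : ℕ, s ≤ t → L (W t) ≤ L (W s) := by
    intro s t
    induction t with
    | zero =>
      intro hst
      rw [Nat.le_zero.mp hst]
    | succ t ih =>
      intro hst
      rcases eq_or_lt_of_le hst with h | h
      · rw [h]
      · exact le_trans (hmono1 t) (ih (Nat.lt_succ_iff.mp h))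
  by_cases hpos : ∀ t ≤ T, 0 < L (W t) - L Wstar
  · have hBpos : 0 < B := by
      have h0 := hpos 0 (Nat.zero_le T)
      have h1 := hepsle 0
      nlinarith [hG0 0]
    have hP : (0:ℝ) < 2 * B^2 := by positivity
    have hstep : ∀ t, 0 < L (W t) - L Wstar → 0 < L (W (t+1)) - L Wstar →
        1 / (L (W t) - L Wstar) + 1 / (2 * B^2) ≤ 1 / (L (W (t+1)) - L Wstar) := by
      intro t h1 h2
      have hd2 := hdesc t
      have he2 := hepsle t
      have hca : L (W (t+1)) - L Wstar ≤ L (W t) - L Wstar := by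
        nlinarith [sq_nonneg (G t)]
      have h4 : (L (W t) - L Wstar)^2 ≤ B^2 * (G t)^2 := by
        nlinarith [he2, h1, hG0 t, hBpos]
      have h5 : (L (W (t+1)) - L Wstar) * (2*B^2)
          ≤ (L (W t) - L Wstar) * (2*B^2) - (L (W t) - L Wstar)^2 := by
        nlinarith [mul_le_mul_of_nonneg_right (show L (W (t+1)) ≤ L (W t) - (G t)^2/2 from hd2)
          (le_of_lt hP), h4]
      have hgoal : (L (W (t+1)) - L Wstar) * (2*B^2 + (L (W t) - L Wstar))
          ≤ (L (W t) - L Wstar) * (2*B^2) := by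
        nlinarith [h5, mul_le_mul_of_nonneg_right hca (le_of_lt h1)]
      rw [div_add_div _ _ (ne_of_gt h1) (ne_of_gt hP), div_le_div_iff₀ (by positivity) h2]
      calc (1 * (2*B^2) + (L (W t) - L Wstar) * 1) * (L (W (t+1)) - L Wstar)
          = (L (W (t+1)) - L Wstar) * (2*B^2 + (L (W t) - L Wstar)) := by ring
        _ ≤ (L (W t) - L Wstar) * (2*B^2) := hgoal
        _ = 1 * ((L (W t) - L Wstar) * (2*B^2)) := by ring
    have hclaim : ∀ t ≤ T, (t : ℝ) / (2 * B^2) ≤ 1 / (L (W t) - L Wstar) := by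
      intro t
      induction t with
      | zero =>
        intro _
        have := hpos 0 (Nat.zero_le T)
        simp only [Nat.cast_zero, zero_div]
        positivity
      | succ t ih =>
        intro ht
        have ht' : t ≤ T := by omega
        have h1 := hpos t ht'
        have h2 := hpos (t+1) ht
        have h3 := hstep t h1 h2
        have ihh := ih ht'
        push_cast
        rw [add_div]
        calc (t:ℝ)/(2*B^2) + 1/(2*B^2) ≤ 1/(L (W t) - L Wstar) + 1/(2*B^2) := by linarith
          _ ≤ 1/(L (W (t+1)) - L Wstar) := h3
    have hTpos : 0 < T := by
      rw [hT]
      apply Nat.ceil_pos.mpr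
      positivity
    have hepsT := hpos T le_rfl
    have hfin := hclaim T le_rfl
    have hTc : 4 * B^2 / ε ≤ (T:ℝ) := by
      rw [hT]
      exact Nat.le_ceil _
    have hTR : (0:ℝ) < T := by exact_mod_cast hTpos
    have h5 : (L (W T) - L Wstar) * (T:ℝ) ≤ 2 * B^2 := by
      have e1 : (T:ℝ)/(2*B^2)*(2*B^2) = (T:ℝ) := div_mul_cancel₀ _ (ne_of_gt hP)
      calc (L (W T) - L Wstar) * (T:ℝ)
          = (L (W T) - L Wstar) * ((T:ℝ)/(2*B^2)) * (2*B^2) := by rw [mul_assoc, e1]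
        _ ≤ (L (W T) - L Wstar) * (1/(L (W T) - L Wstar)) * (2*B^2) := by
            apply mul_le_mul_of_nonneg_right _ (le_of_lt hP)
            exact mul_le_mul_of_nonneg_left hfin (le_of_lt hepsT)
        _ = 2*B^2 := by
            rw [mul_one_div, div_self (ne_of_gt hepsT), one_mul]
    have h6 : 4 * B^2 ≤ ε * T := by
      rw [div_le_iff₀ hε] at hTc
      linarith [hTc]
    have h7 : L (W T) - L Wstar ≤ ε := by
      nlinarith [h5, h6, hepsT, hTR, hε, hB0]
    linarith [h7]
  · push_neg at hpos
    obtain ⟨t, htT, hle⟩ := hpos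
    have h8 := hmono t T htT
    have h9 : L (W T) ≤ L Wstar := by linarith
    linarith [hε]
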